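/- arXiv:1807.08856 — 5 statements merged into one kernel-verified Lean document; each statement's English description precedes it below -/
import Mathlib

section
/- For every p-graph G there exists a p-graph G' in state-determined presentation with the same induced language, L(G') = L(G). -/
/-! Formalization of interaction languages and procrustean graphs (p-graphs). -/

section InteractionLanguages

variable {U Y U' Y' : Type}

/-- A list of events (events are `U ⊕ Y`: actions on the left, observations on the
right) alternates kinds, the first element being an action iff `b = true`. -/
def AltFrom : Bool → List (U ⊕ Y) → Prop
  | _, [] => True
  | b, e :: s => e.isLeft = b ∧ AltFrom (!b) s

/-- A set of event sequences is prefix-closed. -/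
def PrefixClosed (L : Set (List (U ⊕ Y))) : Prop :=
  ∀ s ∈ L, ∀ t : List (U ⊕ Y), t <+: s → t ∈ L

/-- An action-first language: all members alternate starting with an action,
i.e. the language is a subset of (UY)*(U+ε). -/
def IsActionFirst (L : Set (List (U ⊕ Y))) : Prop := ∀ s ∈ L, AltFrom true s

/-- An observation-first language: subset of (YU)*(Y+ε). -/
def IsObservationFirst (L : Set (List (U ⊕ Y))) : Prop := ∀ s ∈ L, AltFrom false s

/-- An interaction language over the event space `U ⊕ Y`. -/
def IsInteractionLang (L : Set (List (U ⊕ Y))) : Prop :=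
  PrefixClosed L ∧ (IsActionFirst L ∨ IsObservationFirst L)

/-- Two languages are akin when both are action-first or both are observation-first. -/
def Akin (LA LB : Set (List (U ⊕ Y))) : Prop :=
  (IsActionFirst LA ∧ IsActionFirst LB) ∨ (IsObservationFirst LA ∧ IsObservationFirst LB)

/-- The last element of the sequence is an action. -/
def ActionTerminal (s : List (U ⊕ Y)) : Prop := ∃ u : U, s.getLast? = some (Sum.inl u)

/-- The last element of the sequence is an observation. -/
def ObservationTerminal (s : List (U ⊕ Y)) : Prop := ∃ y : Y, s.getLast? = some (Sum.inr y)

/-- `LA` is safe on `LB`. -/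
def SafeLang (LA LB : Set (List (U ⊕ Y))) : Prop :=
  ∀ s ∈ LA ∩ LB,
    (ObservationTerminal s → ∀ e : U ⊕ Y, s ++ [e] ∈ LA → s ++ [e] ∈ LB) ∧
    (ActionTerminal s → ∀ e : U ⊕ Y, s ++ [e] ∈ LB → s ++ [e] ∈ LA)

/-- `LA` is finite on `LB`: the lengths of joint sequences are bounded. -/
def FiniteOn (LA LB : Set (List (U ⊕ Y))) : Prop :=
  ∃ k : ℕ, ∀ s ∈ LA ∩ LB, s.length ≤ k

end InteractionLanguages

/-- A procrustean graph (p-graph) over action space `U` and observation space `Y`: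
a finite edge-labeled bipartite directed graph; `label v w` is the set of events
labeling the edge from `v` to `w` (the empty set meaning there is no such edge). -/
structure PGraph (U Y : Type) where
  /-- The (finite) vertex type. -/
  V : Type
  /-- The vertex set is finite. -/
  [finV : Fintype V]
  /-- `true` on action vertices, `false` on observation vertices. -/
  isAct : V → Bool
  /-- Edge labels. -/
  label : V → V → Set (U ⊕ Y)
  /-- Edges from action vertices are labeled by actions and lead to observation vertices. -/
  act_ok : ∀ v w : V, ∀ e ∈ label v w, isAct v = true → e.isLeft = true ∧ isAct w = false
  /-- Edges from observation vertices are labeled by observations and lead to action vertices. -/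
  obs_ok : ∀ v w : V, ∀ e ∈ label v w, isAct v = false → e.isRight = true ∧ isAct w = true
  /-- The set of initial states. -/
  V0 : Set V
  V0_nonempty : V0.Nonempty
  /-- Whether the initial states are action vertices. -/
  startAct : Bool
  /-- Initial states are exclusively action states or exclusively observation states. -/
  V0_uniform : ∀ v ∈ V0, isAct v = startAct

attribute [instance] PGraph.finV

namespace PGraph

variable {U Y U' Y' : Type}

/-- The event sequence `s` transitions in `G` from `v` to `w`. -/
inductive Trans (G : PGraph U Y) : G.V → List (U ⊕ Y) → G.V → Prop
  | nil (v : G.V) : Trans G v [] v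
  | cons {v w x : G.V} {e : U ⊕ Y} {s : List (U ⊕ Y)} :
      e ∈ G.label v w → Trans G w s x → Trans G v (e :: s) x

/-- The induced language of a p-graph: the set of its executions. -/
def lang (G : PGraph U Y) : Set (List (U ⊕ Y)) :=
  {s | ∃ v ∈ G.V0, ∃ w, G.Trans v s w}

/-- A vertex reached by some execution. -/
def Reached (G : PGraph U Y) (w : G.V) : Prop :=
  ∃ s : List (U ⊕ Y), ∃ v ∈ G.V0, G.Trans v s w

/-- A p-graph is in state-determined presentation: a unique initial state and,
at every vertex, labels of distinct outgoing edges pairwise disjoint. -/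
def StateDetermined (G : PGraph U Y) : Prop :=
  (∃ v : G.V, G.V0 = {v}) ∧
  ∀ v w w' : G.V, w ≠ w' → G.label v w ∩ G.label v w' = ∅

/-- A p-graph is single-outputting: every action vertex reached by some execution
has at most one outgoing edge, and that edge's label is a singleton (action) set. -/
def SingleOutputting (G : PGraph U Y) : Prop :=
  ∀ v : G.V, G.isAct v = true → G.Reached v →
    (∀ w w' : G.V, (G.label v w).Nonempty → (G.label v w').Nonempty → w = w') ∧
    (∀ w : G.V, (G.label v w).Nonempty → ∃ u : U, G.label v w = {Sum.inl u})

/-- A deterministic filter: every observation-terminal sequence of the induced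
language has at most one successor in the language. -/
def DeterministicFilter (F : PGraph U Y) : Prop :=
  ∀ s ∈ F.lang, ObservationTerminal s →
    ∀ e e' : U ⊕ Y, s ++ [e] ∈ F.lang → s ++ [e'] ∈ F.lang → e = e'

/-- `IsTrace G v s l`: starting at `v`, the event sequence `s` can be traced along
the sequence of vertices `l` (which begins with `v`). -/
inductive IsTrace (G : PGraph U Y) : G.V → List (U ⊕ Y) → List G.V → Prop
  | nil (v : G.V) : IsTrace G v [] [v]
  | cons {v w : G.V} {e : U ⊕ Y} {s : List (U ⊕ Y)} {l : List G.V} :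
      e ∈ G.label v w → IsTrace G w s l → IsTrace G v (e :: s) (v :: l)

/-- A practicable filter: a single-outputting p-graph in which the validity of every
sequence of the induced language is the consequence of exactly one sequence of
state transitions. -/
def Practicable (F : PGraph U Y) : Prop :=
  F.SingleOutputting ∧
  ∀ s ∈ F.lang, ∃! l : List F.V, ∃ v0 ∈ F.V0, F.IsTrace v0 s l

/-- `P` is safe on `W` (as p-graphs). -/
def SafeOn (P W : PGraph U Y) : Prop := SafeLang P.lang W.lang

/-- The event sequence `s` transitions in `P` from some initial state to some vertex
of the region `T`. -/
def ReachesVia (P : PGraph U Y) (T : Set P.V) (s : List (U ⊕ Y)) : Prop :=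
  ∃ v0 ∈ P.V0, ∃ v ∈ T, P.Trans v0 s v

/-- The plan `(P, Pterm)` solves the planning problem `(W, Vgoal)`. -/
def Solves (P : PGraph U Y) (Pterm : Set P.V) (W : PGraph U Y) (Vgoal : Set W.V) : Prop :=
  Akin P.lang W.lang ∧
  FiniteOn P.lang W.lang ∧
  SafeLang P.lang W.lang ∧
  (∀ s ∈ P.lang ∩ W.lang,
    ReachesVia P Pterm s ∨ ∃ t ∈ P.lang ∩ W.lang, s <+: t ∧ ReachesVia P Pterm t) ∧
  (∀ s ∈ P.lang ∩ W.lang, ReachesVia P Pterm s →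
    ∀ w0 ∈ W.V0, ∀ w : W.V, W.Trans w0 s w → w ∈ Vgoal)

/-- The relation `R ⊆ V(P) × V(W)` relating `v` and `w` when some joint-execution
transitions in `P` from an initial state to `v` and in `W` from an initial state to `w`. -/
def HomRel (P W : PGraph U Y) (v : P.V) (w : W.V) : Prop :=
  ∃ s ∈ P.lang ∩ W.lang, (∃ v0 ∈ P.V0, P.Trans v0 s v) ∧ (∃ w0 ∈ W.V0, W.Trans w0 s w)

/-- A homomorphic solution: a solution for which the relation `HomRel` is a function. -/
def HomomorphicSolution (P : PGraph U Y) (Pterm : Set P.V) (W : PGraph U Y)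
    (Vgoal : Set W.V) : Prop :=
  Solves P Pterm W Vgoal ∧
  ∀ (v : P.V) (w w' : W.V), HomRel P W v w → HomRel P W v w' → w = w'

/-- The union `P ⊎ Q` of two p-graphs (whose initial states are of matching kind). -/
def union (P Q : PGraph U Y) (h : P.startAct = Q.startAct) : PGraph U Y where
  V := P.V ⊕ Q.V
  isAct := Sum.elim P.isAct Q.isAct
  label := fun v w =>
    match v, w with
    | Sum.inl a, Sum.inl b => P.label a b
    | Sum.inr a, Sum.inr b => Q.label a b
    | _, _ => ∅
  act_ok := by
    rintro (a | a) (b | b) e he hv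
    · exact P.act_ok a b e he hv
    · exact absurd he (Set.notMem_empty e)
    · exact absurd he (Set.notMem_empty e)
    · exact Q.act_ok a b e he hv
  obs_ok := by
    rintro (a | a) (b | b) e he hv
    · exact P.obs_ok a b e he hv
    · exact absurd he (Set.notMem_empty e)
    · exact absurd he (Set.notMem_empty e)
    · exact Q.obs_ok a b e he hv
  V0 := Sum.inl '' P.V0 ∪ Sum.inr '' Q.V0
  V0_nonempty := by
    obtain ⟨v, hv⟩ := P.V0_nonempty
    exact ⟨Sum.inl v, Or.inl ⟨v, hv, rfl⟩⟩
  startAct := P.startAct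
  V0_uniform := by
    rintro v (⟨a, ha, rfl⟩ | ⟨a, ha, rfl⟩)
    · exact P.V0_uniform a ha
    · exact (Q.V0_uniform a ha).trans h.symm

/-- The set of states reached in `P` from some initial state by the event sequence `s`. -/
def reachSet (P : PGraph U Y) (s : List (U ⊕ Y)) : Set P.V :=
  {w | ∃ v0 ∈ P.V0, P.Trans v0 s w}

lemma trans_nil_eq {P : PGraph U Y} {v w : P.V} (h : P.Trans v [] w) : w = v := by
  cases h; rfl

lemma edge_flips {P : PGraph U Y} {v w : P.V} {e : U ⊕ Y} (he : e ∈ P.label v w) :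
    P.isAct w = !P.isAct v := by
  cases hv : P.isAct v
  · simpa using (P.obs_ok v w e he hv).2
  · simpa using (P.act_ok v w e he hv).2

lemma trans_parity {P : PGraph U Y} {v w : P.V} {s : List (U ⊕ Y)}
    (h : P.Trans v s w) : P.isAct w = Bool.xor (P.isAct v) (decide (s.length % 2 = 1)) := by
  induction h with
  | nil v => simp
  | cons he _ ih =>
    rename_i v' w' x' e s' _
    rw [ih, edge_flips he]
    rcases Nat.even_or_odd s'.length with hp | hp <;>
      rcases hb : P.isAct v' <;>
      simp_all [Nat.even_iff, Nat.odd_iff, List.length_cons, Nat.succ_mod_two_eq_one_iff,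
        Nat.succ_mod_two_eq_zero_iff]
  
lemma reachSet_homog {P : PGraph U Y} {s : List (U ⊕ Y)} {v w : P.V}
    (hv : v ∈ P.reachSet s) (hw : w ∈ P.reachSet s) : P.isAct v = P.isAct w := by
  obtain ⟨v0, hv0, hv⟩ := hv
  obtain ⟨w0, hw0, hw⟩ := hw
  rw [trans_parity hv, trans_parity hw, P.V0_uniform v0 hv0, P.V0_uniform w0 hw0]

lemma trans_append {P : PGraph U Y} {v x : P.V} {s t : List (U ⊕ Y)}
    (h : P.Trans v (s ++ t) x) : ∃ m : P.V, P.Trans v s m ∧ P.Trans m t x := by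
  induction s generalizing v with
  | nil => exact ⟨v, Trans.nil v, h⟩
  | cons e s ih =>
    cases h with
    | cons he h' =>
      obtain ⟨m, h1, h2⟩ := ih h'
      exact ⟨m, Trans.cons he h1, h2⟩

lemma trans_single {P : PGraph U Y} {v x : P.V} {e : U ⊕ Y}
    (h : P.Trans v [e] x) : e ∈ P.label v x := by
  cases h with
  | cons he h' =>
    rw [trans_nil_eq h']
    exact he

/-- The powerset determinization of a p-graph `P`: vertices are the subsets of
`V(P)` of the form `S(s) = reachSet P s` for `s ∈ L(P)`, the single initial state is
`S(ε) = V0(P)`, and the label of the edge from `S` to `T` contains `e` exactly when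
`S = S(s)`, `T = S(s·e)` for some `s` with `s, s·e ∈ L(P)`. -/
noncomputable def determinize (P : PGraph U Y) : PGraph U Y where
  V := {S : Set P.V // ∃ s ∈ P.lang, P.reachSet s = S}
  finV := Fintype.ofFinite _
  isAct := fun S => by classical exact decide (∃ v ∈ S.1, P.isAct v = true)
  label := fun S T =>
    {e | ∃ s ∈ P.lang, P.reachSet s = S.1 ∧ s ++ [e] ∈ P.lang ∧ P.reachSet (s ++ [e]) = T.1}
  act_ok := by
    classical
    rintro S T e ⟨s, hs, hS, hse, hT⟩ hv
    rw [decide_eq_true_iff] at hv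
    obtain ⟨v, hvS, hvAct⟩ := hv
    obtain ⟨v0, hv0, x, hx⟩ := hse
    obtain ⟨m, hm, hmx⟩ := trans_append hx
    have hmS : m ∈ P.reachSet s := ⟨v0, hv0, hm⟩
    have hedge : e ∈ P.label m x := trans_single hmx
    have hmAct : P.isAct m = true := by
      rw [← hS] at hvS
      rw [reachSet_homog hmS hvS, hvAct]
    obtain ⟨hL, hxA⟩ := P.act_ok m x e hedge hmAct
    refine ⟨hL, ?_⟩
    rw [decide_eq_false_iff_not]
    rintro ⟨w, hwT, hwAct⟩
    rw [← hT] at hwT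
    have hxT : x ∈ P.reachSet (s ++ [e]) := ⟨v0, hv0, hx⟩
    rw [reachSet_homog hwT hxT, hxA] at hwAct
    exact Bool.false_ne_true hwAct
  obs_ok := by
    classical
    rintro S T e ⟨s, hs, hS, hse, hT⟩ hv
    rw [decide_eq_false_iff_not] at hv
    obtain ⟨v0, hv0, x, hx⟩ := hse
    obtain ⟨m, hm, hmx⟩ := trans_append hx
    have hmS : m ∈ P.reachSet s := ⟨v0, hv0, hm⟩
    have hedge : e ∈ P.label m x := trans_single hmx
    have hmObs : P.isAct m = false := by
      rcases hma : P.isAct m with _ | _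
      · rfl
      · exact absurd ⟨m, by rwa [hS] at hmS, hma⟩ hv
    obtain ⟨hR, hxA⟩ := P.obs_ok m x e hedge hmObs
    refine ⟨hR, ?_⟩
    rw [decide_eq_true_iff]
    refine ⟨x, ?_, hxA⟩
    rw [← hT]
    exact ⟨v0, hv0, hx⟩
  V0 := {⟨P.reachSet [],
    ⟨[], ⟨P.V0_nonempty.choose, P.V0_nonempty.choose_spec,
      P.V0_nonempty.choose, Trans.nil _⟩, rfl⟩⟩}
  V0_nonempty := ⟨_, rfl⟩
  startAct := P.startAct
  V0_uniform := by
    classical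
    rintro S hS
    rw [Set.mem_singleton_iff] at hS
    subst hS
    rcases hsa : P.startAct with _ | _
    · rw [decide_eq_false_iff_not]
      rintro ⟨v, ⟨v0, hv0, hv⟩, hvAct⟩
      rw [trans_nil_eq hv] at hvAct
      rw [P.V0_uniform v0 hv0, hsa] at hvAct
      exact Bool.false_ne_true hvAct
    · rw [decide_eq_true_iff]
      obtain ⟨v, hv⟩ := P.V0_nonempty
      exact ⟨v, ⟨v, hv, Trans.nil v⟩, by rw [P.V0_uniform v hv, hsa]⟩

end PGraph
section Maps

variable {U Y U' Y' : Type}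

/-- A label map: an action map together with an observation map, each assigning a
nonempty set of new events to each event. -/
structure LabelMap (U Y U' Y' : Type) where
  actMap : U → Set U'
  obsMap : Y → Set Y'
  actMap_nonempty : ∀ u : U, (actMap u).Nonempty
  obsMap_nonempty : ∀ y : Y, (obsMap y).Nonempty

/-- Action of a label map on a single event. -/
def LabelMap.event (h : LabelMap U Y U' Y') : U ⊕ Y → Set (U' ⊕ Y')
  | Sum.inl u => Sum.inl '' h.actMap u
  | Sum.inr y => Sum.inr '' h.obsMap y

/-- Extension of a label map to sets of events: `h(S) = ⋃_{e ∈ S} h(e)`. -/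
def LabelMap.setImage (h : LabelMap U Y U' Y') (S : Set (U ⊕ Y)) : Set (U' ⊕ Y') :=
  ⋃ e ∈ S, h.event e

/-- Extension of a label map to p-graphs: replace each edge label `S` with `h(S)`. -/
def PGraph.applyMap (h : LabelMap U Y U' Y') (G : PGraph U Y) : PGraph U' Y' where
  V := G.V
  isAct := G.isAct
  label := fun v w => h.setImage (G.label v w)
  act_ok := by
    intro v w e' he' hv
    simp only [LabelMap.setImage, Set.mem_iUnion, exists_prop] at he'
    obtain ⟨e, he, hmem⟩ := he'
    have h1 := G.act_ok v w e he hv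
    refine ⟨?_, h1.2⟩
    cases e with
    | inl u =>
      simp only [LabelMap.event] at hmem
      obtain ⟨u', _, rfl⟩ := hmem
      rfl
    | inr y => simp at h1
  obs_ok := by
    intro v w e' he' hv
    simp only [LabelMap.setImage, Set.mem_iUnion, exists_prop] at he'
    obtain ⟨e, he, hmem⟩ := he'
    have h1 := G.obs_ok v w e he hv
    refine ⟨?_, h1.2⟩
    cases e with
    | inl u => simp at h1
    | inr y =>
      simp only [LabelMap.event] at hmem
      obtain ⟨y', _, rfl⟩ := hmem
      rfl
  V0 := G.V0
  V0_nonempty := G.V0_nonempty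
  startAct := G.startAct
  V0_uniform := G.V0_uniform

/-- Action of an observation map on a single event (actions are left unchanged). -/
def obsEventImage (h : Y → Set Y') : U ⊕ Y → Set (U ⊕ Y')
  | Sum.inl u => {Sum.inl u}
  | Sum.inr y => Sum.inr '' h y

/-- `h_y(F)`: the p-graph `F` with each observation edge label `S` replaced by
`⋃_{y ∈ S} h_y(y)` (action labels unchanged). -/
def PGraph.mapObs (G : PGraph U Y) (h : Y → Set Y') : PGraph U Y' where
  V := G.V
  isAct := G.isAct
  label := fun v w => ⋃ e ∈ G.label v w, obsEventImage h e
  act_ok := by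
    intro v w e' he' hv
    simp only [Set.mem_iUnion, exists_prop] at he'
    obtain ⟨e, he, hmem⟩ := he'
    have h1 := G.act_ok v w e he hv
    refine ⟨?_, h1.2⟩
    cases e with
    | inl u =>
      simp only [obsEventImage, Set.mem_singleton_iff] at hmem
      subst hmem
      rfl
    | inr y => simp at h1
  obs_ok := by
    intro v w e' he' hv
    simp only [Set.mem_iUnion, exists_prop] at he'
    obtain ⟨e, he, hmem⟩ := he'
    have h1 := G.obs_ok v w e he hv
    refine ⟨?_, h1.2⟩
    cases e with
    | inl u => simp at h1
    | inr y =>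
      simp only [obsEventImage] at hmem
      obtain ⟨y', _, rfl⟩ := hmem
      rfl
  V0 := G.V0
  V0_nonempty := G.V0_nonempty
  startAct := G.startAct
  V0_uniform := G.V0_uniform

/-- `corrEvent h e f` holds when `f ∈ h_y(e)` for observations and `f = e` for actions. -/
def corrEvent (h : Y → Set Y') : U ⊕ Y → U ⊕ Y' → Prop
  | Sum.inl u, Sum.inl u' => u' = u
  | Sum.inr y, Sum.inr y' => y' ∈ h y
  | _, _ => False

/-- `F` is equivalent to `F'` modulo the observation map `h`. -/
def EquivMod (F : PGraph U Y) (F' : PGraph U Y') (h : Y → Set Y') : Prop :=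
  ∀ s ∈ F.lang, ObservationTerminal s →
    {u : U | s ++ [Sum.inl u] ∈ F.lang} =
      {u : U | ∃ t : List (U ⊕ Y'),
        List.Forall₂ (corrEvent h) s t ∧ t ++ [Sum.inl u] ∈ F'.lang}

/-- The observation map `h` is non-destructive on `F`. -/
def ObsNonDestructive (F : PGraph U Y) (h : Y → Set Y') : Prop :=
  EquivMod F (F.mapObs h) h

end Maps

namespace PGraph

variable {U Y : Type}

lemma trans_concat {P : PGraph U Y} {v m x : P.V} {s t : List (U ⊕ Y)}
    (h1 : P.Trans v s m) (h2 : P.Trans m t x) : P.Trans v (s ++ t) x := by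
  induction h1 with
  | nil => exact h2
  | cons he _ ih => exact Trans.cons he (ih h2)

lemma mem_lang_iff_reachSet_nonempty {P : PGraph U Y} {s : List (U ⊕ Y)} :
    s ∈ P.lang ↔ (P.reachSet s).Nonempty := by
  constructor
  · rintro ⟨v0, hv0, w, hw⟩; exact ⟨w, v0, hv0, hw⟩
  · rintro ⟨w, v0, hv0, hw⟩; exact ⟨v0, hv0, w, hw⟩

lemma reachSet_step (P : PGraph U Y) (s : List (U ⊕ Y)) (e : U ⊕ Y) :
    P.reachSet (s ++ [e]) = {x | ∃ m ∈ P.reachSet s, e ∈ P.label m x} := by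
  ext x
  constructor
  · rintro ⟨v0, hv0, hx⟩
    obtain ⟨m, h1, h2⟩ := trans_append hx
    exact ⟨m, ⟨v0, hv0, h1⟩, trans_single h2⟩
  · rintro ⟨m, ⟨v0, hv0, h1⟩, he⟩
    exact ⟨v0, hv0, trans_concat h1 (Trans.cons he (Trans.nil x))⟩

lemma reachSet_step_congr {P : PGraph U Y} {s t : List (U ⊕ Y)}
    (h : P.reachSet s = P.reachSet t) (e : U ⊕ Y) :
    P.reachSet (s ++ [e]) = P.reachSet (t ++ [e]) := by
  rw [reachSet_step, reachSet_step, h]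

/-- Forward direction: executions of `P` are executions of the determinization. -/
lemma determinize_trans_of_lang {P : PGraph U Y} :
    ∀ s ∈ P.lang, ∀ hS : ∃ t ∈ P.lang, P.reachSet t = P.reachSet s,
      P.determinize.Trans ⟨P.reachSet [], by
          exact ⟨[], ⟨P.V0_nonempty.choose, P.V0_nonempty.choose_spec,
            P.V0_nonempty.choose, Trans.nil _⟩, rfl⟩⟩ s ⟨P.reachSet s, hS⟩ := by
  intro s
  induction s using List.reverseRecOn with
  | nil => intro _ _; exact Trans.nil _
  | append_singleton s e ih =>
    intro hse hS
    have hs : s ∈ P.lang := by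
      obtain ⟨v0, hv0, w, hw⟩ := hse
      obtain ⟨m, h1, _⟩ := trans_append hw
      exact ⟨v0, hv0, m, h1⟩
    have hstep := ih hs ⟨s, hs, rfl⟩
    refine trans_concat hstep (Trans.cons ?_ (Trans.nil _))
    exact ⟨s, hs, rfl, hse, rfl⟩

/-- Backward direction. -/
lemma determinize_trans_lang {P : PGraph U Y} {S T : P.determinize.V}
    {s : List (U ⊕ Y)} (h : P.determinize.Trans S s T) :
    ∀ t : List (U ⊕ Y), t ∈ P.lang → P.reachSet t = S.1 →
      t ++ s ∈ P.lang ∧ P.reachSet (t ++ s) = T.1 := by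
  induction h with
  | nil v => intro t ht hrt; simpa using ⟨ht, hrt⟩
  | cons he _ ih =>
    rename_i v w x e s' _
    intro t ht hrt
    obtain ⟨s0, hs0, hrs0, hs0e, hrs0e⟩ := he
    have hcong : P.reachSet (t ++ [e]) = P.reachSet (s0 ++ [e]) :=
      reachSet_step_congr (by rw [hrt, hrs0]) e
    have hte : t ++ [e] ∈ P.lang := by
      rw [mem_lang_iff_reachSet_nonempty, hcong]
      exact mem_lang_iff_reachSet_nonempty.mp hs0e
    have := ih (t ++ [e]) hte (by rw [hcong, hrs0e])
    simpa [List.append_assoc] using this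

end PGraph

/-- For every p-graph `G` there exists a p-graph `G'` in state-determined
presentation with the same induced language, `L(G') = L(G)`. -/
theorem exists_state_determined_presentation
    {U Y : Type} [Nonempty U] [Nonempty Y] (G : PGraph U Y) :
    ∃ G' : PGraph U Y, G'.StateDetermined ∧ G'.lang = G.lang := by
  refine ⟨G.determinize, ⟨⟨_, rfl⟩, ?_⟩, ?_⟩
  · -- disjoint labels
    intro S T T' hne
    by_contra h
    obtain ⟨e, he1, he2⟩ := Set.nonempty_iff_ne_empty.mpr h
    obtain ⟨s, _, hrs, _, hrT⟩ := he1
    obtain ⟨s', _, hrs', _, hrT'⟩ := he2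
    apply hne
    apply Subtype.ext
    rw [← hrT, ← hrT']
    exact PGraph.reachSet_step_congr (by rw [hrs, hrs']) e
  · -- language equality
    ext s
    constructor
    · rintro ⟨S, hS, T, hT⟩
      have hS' : S = ⟨G.reachSet [], _⟩ := hS
      subst hS'
      have := PGraph.determinize_trans_lang hT [] (by
        rw [PGraph.mem_lang_iff_reachSet_nonempty]
        obtain ⟨v, hv⟩ := G.V0_nonempty
        exact ⟨v, v, hv, PGraph.Trans.nil v⟩) rfl
      simpa using this.1
    · intro hs
      exact ⟨_, rfl, _, PGraph.determinize_trans_of_lang s hs ⟨s, hs, rfl⟩⟩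
end

section
/- For every p-graph F whose action space U is finite, there exists a single-outputting p-graph F' with the same induced language, L(F') = L(F). -/
section SOConstruction

variable {U Y : Type}

/-- One-step successor set. -/
def stepE (F : PGraph U Y) (S : Set F.V) (e : U ⊕ Y) : Set F.V :=
  {w | ∃ v ∈ S, e ∈ F.label v w}

/-- Iterated successor set. -/
def foldStep (F : PGraph U Y) (S : Set F.V) (s : List (U ⊕ Y)) : Set F.V :=
  s.foldl (stepE F) S

@[simp] lemma foldStep_nil (F : PGraph U Y) (S : Set F.V) : foldStep F S [] = S := rfl

@[simp] lemma foldStep_cons (F : PGraph U Y) (S : Set F.V) (e : U ⊕ Y) (s : List (U ⊕ Y)) :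
    foldStep F S (e :: s) = foldStep F (stepE F S e) s := rfl

lemma stepE_empty (F : PGraph U Y) (e : U ⊕ Y) : stepE F ∅ e = ∅ := by
  ext w; simp [stepE]

lemma foldStep_empty (F : PGraph U Y) (s : List (U ⊕ Y)) : foldStep F ∅ s = ∅ := by
  induction s with
  | nil => rfl
  | cons e s ih => rw [foldStep_cons, stepE_empty, ih]

lemma mem_foldStep (F : PGraph U Y) :
    ∀ (s : List (U ⊕ Y)) (S : Set F.V) (w : F.V),
      w ∈ foldStep F S s ↔ ∃ v ∈ S, F.Trans v s w := by
  intro s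
  induction s with
  | nil =>
    intro S w
    constructor
    · intro h; exact ⟨w, h, PGraph.Trans.nil w⟩
    · rintro ⟨v, hv, ht⟩; rw [foldStep_nil, PGraph.trans_nil_eq ht]; exact hv
  | cons e s ih =>
    intro S w
    rw [foldStep_cons, ih]
    constructor
    · rintro ⟨m, ⟨v, hv, he⟩, ht⟩
      exact ⟨v, hv, PGraph.Trans.cons he ht⟩
    · rintro ⟨v, hv, ht⟩
      cases ht with
      | cons he ht' => exact ⟨_, ⟨v, hv, he⟩, ht'⟩

lemma lang_iff_foldStep (F : PGraph U Y) (s : List (U ⊕ Y)) :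
    s ∈ F.lang ↔ (foldStep F F.V0 s).Nonempty := by
  constructor
  · rintro ⟨v, hv, w, ht⟩
    exact ⟨w, (mem_foldStep F s F.V0 w).2 ⟨v, hv, ht⟩⟩
  · rintro ⟨w, hw⟩
    obtain ⟨v, hv, ht⟩ := (mem_foldStep F s F.V0 w).1 hw
    exact ⟨v, hv, w, ht⟩

/-- All members of `S` have activity bit `b`. -/
def AllAct (F : PGraph U Y) (S : Set F.V) (b : Bool) : Prop := ∀ v ∈ S, F.isAct v = b

lemma stepE_allAct {F : PGraph U Y} {S : Set F.V} {b : Bool} (h : AllAct F S b) (e : U ⊕ Y) :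
    AllAct F (stepE F S e) (!b) := by
  rintro w ⟨v, hv, he⟩
  rw [PGraph.edge_flips he, h v hv]

lemma stepE_act_inr {F : PGraph U Y} {S : Set F.V} (h : AllAct F S true) (y : Y) :
    stepE F S (Sum.inr y) = ∅ := by
  ext w
  simp only [stepE, Set.mem_setOf_eq, Set.mem_empty_iff_false, iff_false]
  rintro ⟨v, hv, he⟩
  have := (F.act_ok v w _ he (h v hv)).1
  simp at this

lemma stepE_obs_inl {F : PGraph U Y} {S : Set F.V} (h : AllAct F S false) (u : U) :
    stepE F S (Sum.inl u) = ∅ := by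
  ext w
  simp only [stepE, Set.mem_setOf_eq, Set.mem_empty_iff_false, iff_false]
  rintro ⟨v, hv, he⟩
  have := (F.obs_ok v w _ he (h v hv)).1
  simp at this

/-- The single-outputting presentation of `F`. -/
noncomputable def singleOut [Nonempty U] [Finite U] (F : PGraph U Y) : PGraph U Y where
  V := Set F.V ⊕ Set F.V × U
  finV := Fintype.ofFinite _
  isAct := Sum.elim (fun _ => false) (fun _ => true)
  label := fun p q =>
    match p, q with
    | Sum.inl S, Sum.inr (T, _) =>
        {e | ∃ y : Y, e = Sum.inr y ∧ stepE F S e = T ∧ T.Nonempty}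
    | Sum.inr (S, u), Sum.inl T =>
        {e | e = Sum.inl u ∧ stepE F S e = T ∧ T.Nonempty}
    | _, _ => ∅
  act_ok := by
    rintro (S | ⟨S, u⟩) (T | ⟨T, u'⟩) e he hv
    · exact he.elim
    · exact absurd hv Bool.false_ne_true
    · obtain ⟨rfl, _, _⟩ := he
      exact ⟨rfl, rfl⟩
    · exact he.elim
  obs_ok := by
    rintro (S | ⟨S, u⟩) (T | ⟨T, u'⟩) e he hv
    · exact he.elim
    · obtain ⟨y, rfl, _, _⟩ := he
      exact ⟨rfl, rfl⟩
    · exact Bool.noConfusion hv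
    · exact he.elim
  V0 := if F.startAct then {q | ∃ u : U, q = Sum.inr (F.V0, u)} else {Sum.inl F.V0}
  V0_nonempty := by
    by_cases h : F.startAct = true
    · exact ⟨Sum.inr (F.V0, Classical.arbitrary U), by simp [h]⟩
    · exact ⟨Sum.inl F.V0, by simp [h]⟩
  startAct := F.startAct
  V0_uniform := by
    intro v hv
    by_cases h : F.startAct = true <;> simp [h] at hv ⊢
    · obtain ⟨u, rfl⟩ := hv; simp
    · subst hv; simp [Bool.eq_false_iff.mpr h]

variable [Nonempty U] [Finite U]

/-- The underlying subset of a state of `singleOut F`. -/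
def carrierSO (F : PGraph U Y) : (singleOut F).V → Set F.V := Sum.elim id Prod.fst

lemma singleOut_sound {F : PGraph U Y} :
    ∀ {s : List (U ⊕ Y)} {p q : (singleOut F).V},
      (singleOut F).Trans p s q → (carrierSO F p).Nonempty →
      (foldStep F (carrierSO F p) s).Nonempty := by
  intro s p q ht
  induction ht with
  | nil v => intro h; exact h
  | cons he _ ih =>
    rename_i v w x e s' _
    intro _
    rcases v with S | ⟨S, u⟩ <;> rcases w with T | ⟨T, u'⟩
    · exact he.elim
    · obtain ⟨y, rfl, hst, hne⟩ := he
      have : stepE F (carrierSO F (Sum.inl S)) (Sum.inr y) = carrierSO F (Sum.inr (T, u')) := hst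
      rw [foldStep_cons, this]
      exact ih hne
    · obtain ⟨rfl, hst, hne⟩ := he
      have : stepE F (carrierSO F (Sum.inr (S, u))) (Sum.inl u) = carrierSO F (Sum.inl T) := hst
      rw [foldStep_cons, this]
      exact ih hne
    · exact he.elim

lemma singleOut_complete {F : PGraph U Y} :
    ∀ (s : List (U ⊕ Y)) (p : (singleOut F).V),
      AllAct F (carrierSO F p) ((singleOut F).isAct p) →
      (foldStep F (carrierSO F p) s).Nonempty →
      (∀ S u, p = Sum.inr (S, u) → s = [] ∨ ∃ rest, s = Sum.inl u :: rest) →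
      ∃ q, (singleOut F).Trans p s q := by
  intro s
  induction s with
  | nil => intro p _ _ _; exact ⟨p, PGraph.Trans.nil p⟩
  | cons e s ih =>
    rintro (S | ⟨S, u⟩) hall hne hc
    · -- observation state; e must be inr y
      have hallS : AllAct F S false := hall
      rcases e with u' | y
      · rw [foldStep_cons] at hne
        rw [show (stepE F (carrierSO F (Sum.inl S)) (Sum.inl u')) = ∅ from
          stepE_obs_inl hallS u', foldStep_empty] at hne
        exact absurd hne (by simp [Set.not_nonempty_empty])
      · set T : Set F.V := stepE F S (Sum.inr y) with hT
        rw [foldStep_cons] at hne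
        have hTne : T.Nonempty := by
          by_contra h
          rw [Set.not_nonempty_iff_eq_empty] at h
          rw [show stepE F (carrierSO F (Sum.inl S)) (Sum.inr y) = T from rfl, h,
            foldStep_empty] at hne
          simp at hne
        have hTact : AllAct F T true := by
          have := stepE_allAct hallS (Sum.inr y : U ⊕ Y)
          simpa [hT] using this
        -- choose the committed action
        obtain ⟨u, hu⟩ : ∃ u : U, s = [] ∨ ∃ rest, s = Sum.inl u :: rest := by
          rcases s with _ | ⟨e', rest⟩
          · exact ⟨Classical.arbitrary U, Or.inl rfl⟩
          · rcases e' with u' | y'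
            · exact ⟨u', Or.inr ⟨rest, rfl⟩⟩
            · exfalso
              rw [show stepE F (carrierSO F (Sum.inl S)) (Sum.inr y) = T from rfl,
                foldStep_cons] at hne
              rw [stepE_act_inr hTact y', foldStep_empty] at hne
              simp at hne
        obtain ⟨q, hq⟩ := ih (Sum.inr (T, u))
          hTact
          (by exact hne)
          (by rintro S' u' h; injection h with h'; injection h' with h1 h2
              subst h2; exact hu)
        refine ⟨q, PGraph.Trans.cons ?_ hq⟩
        exact ⟨y, rfl, rfl, hTne⟩
    · -- action state committed to u; e must be inl u
      have hallS : AllAct F S true := hall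
      rcases hc S u rfl with h | ⟨rest, h⟩
      · exact absurd h (by simp)
      · injection h with h1 h2
        subst h1 h2
        set T : Set F.V := stepE F S (Sum.inl u) with hT
        rw [foldStep_cons] at hne
        have hTne : T.Nonempty := by
          by_contra h
          rw [Set.not_nonempty_iff_eq_empty] at h
          rw [show stepE F (carrierSO F (Sum.inr (S, u))) (Sum.inl u) = T from rfl, h,
            foldStep_empty] at hne
          simp at hne
        have hTobs : AllAct F T false := by
          have := stepE_allAct hallS (Sum.inl u : U ⊕ Y)
          simpa [hT] using this
        obtain ⟨q, hq⟩ := ih (Sum.inl T)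
          hTobs
          (by exact hne)
          (by rintro S' u' h; exact absurd h (by simp))
        refine ⟨q, PGraph.Trans.cons ?_ hq⟩
        exact ⟨rfl, rfl, hTne⟩

lemma singleOut_single_outputting (F : PGraph U Y) : (singleOut F).SingleOutputting := by
  rintro (S | ⟨S, u⟩) hv _
  · simp [singleOut] at hv
  · constructor
    · rintro (T | ⟨T, u'⟩) (T' | ⟨T', u''⟩) ⟨e, he⟩ ⟨e', he'⟩
      · obtain ⟨rfl, h1, _⟩ := he
        obtain ⟨rfl, h2, _⟩ := he'
        rw [← h1, ← h2]
      · exact he'.elim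
      · exact he.elim
      · exact he.elim
    · rintro (T | ⟨T, u'⟩) ⟨e, he⟩
      · obtain ⟨rfl, h1, h2⟩ := he
        refine ⟨u, ?_⟩
        ext e'
        constructor
        · rintro ⟨rfl, _, _⟩; rfl
        · rintro rfl; exact ⟨rfl, h1, h2⟩
      · exact he.elim

lemma singleOut_lang (F : PGraph U Y) : (singleOut F).lang = F.lang := by
  ext s
  rw [lang_iff_foldStep F s]
  constructor
  · rintro ⟨p, hp, q, ht⟩
    have hcar : carrierSO F p = F.V0 := by
      by_cases h : F.startAct = true <;> simp [singleOut, h] at hp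
      · obtain ⟨u, rfl⟩ := hp; rfl
      · subst hp; rfl
    have := singleOut_sound ht (by rw [hcar]; exact F.V0_nonempty)
    rwa [hcar] at this
  · intro hne
    by_cases h : F.startAct = true
    · have hall : AllAct F F.V0 true := fun v hv => by rw [F.V0_uniform v hv, h]
      rcases s with _ | ⟨e, rest⟩
      · refine ⟨Sum.inr (F.V0, Classical.arbitrary U), by simp [singleOut, h]; exact ⟨_, rfl⟩, _,
          PGraph.Trans.nil _⟩
      · rcases e with u | y
        · obtain ⟨q, hq⟩ := singleOut_complete (F := F) (Sum.inl u :: rest) (Sum.inr (F.V0, u))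
            hall hne (by rintro S' u' h'; injection h' with h''; injection h'' with h1 h2
                         subst h2; exact Or.inr ⟨rest, rfl⟩)
          exact ⟨Sum.inr (F.V0, u), by simp [singleOut, h]; exact ⟨_, rfl⟩, q, hq⟩
        · exfalso
          rw [foldStep_cons, stepE_act_inr hall y, foldStep_empty] at hne
          simp at hne
    · have hall : AllAct F F.V0 false := fun v hv => by
        rw [F.V0_uniform v hv, Bool.eq_false_iff.mpr h]
      obtain ⟨q, hq⟩ := singleOut_complete (F := F) s (Sum.inl F.V0)
        hall hne (by rintro S' u' h'; exact absurd h' (by simp))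
      exact ⟨Sum.inl F.V0, by simp [singleOut, h]; exact Set.mem_singleton _, q, hq⟩

end SOConstruction

/-- For every p-graph `F` whose action space `U` is finite, there exists a
single-outputting p-graph `F'` with the same induced language, `L(F') = L(F)`. -/
theorem exists_single_outputting_presentation
    {U Y : Type} [Nonempty U] [Nonempty Y] [Finite U] (F : PGraph U Y) :
    ∃ F' : PGraph U Y, F'.SingleOutputting ∧ F'.lang = F.lang := by
  exact ⟨singleOut F, singleOut_single_outputting F, singleOut_lang F⟩
end

section
/- Let (W, V_goal) be a planning problem with W in state-determined presentation. If some plan solves (W, V_goal), then some plan that is a homomorphic solution solves (W, V_goal). -/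
section AuxProd

namespace PGraph

variable {U Y : Type}

/-- Product of a plan `P` with the world `W`. -/
def prodW (P W : PGraph U Y) : PGraph U Y where
  V := P.V × W.V
  isAct := fun x => P.isAct x.1
  label := fun x y => P.label x.1 y.1 ∩ W.label x.2 y.2
  act_ok := fun x y e he hv => P.act_ok x.1 y.1 e he.1 hv
  obs_ok := fun x y e he hv => P.obs_ok x.1 y.1 e he.1 hv
  V0 := P.V0 ×ˢ W.V0
  V0_nonempty := P.V0_nonempty.prod W.V0_nonempty
  startAct := P.startAct
  V0_uniform := fun v hv => P.V0_uniform v.1 hv.1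

lemma prodW_trans_iff {P W : PGraph U Y} {s : List (U ⊕ Y)} {x y : (P.prodW W).V} :
    (P.prodW W).Trans x s y ↔ P.Trans x.1 s y.1 ∧ W.Trans x.2 s y.2 := by
  constructor
  · intro h
    induction h with
    | nil v => exact ⟨Trans.nil _, Trans.nil _⟩
    | cons he _ ih => exact ⟨Trans.cons he.1 ih.1, Trans.cons he.2 ih.2⟩
  · rintro ⟨hp, hw⟩
    induction s generalizing x with
    | nil =>
      have h1 := trans_nil_eq hp
      have h2 := trans_nil_eq hw
      have : y = x := Prod.ext h1 h2
      subst this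
      exact Trans.nil _
    | cons e s ih =>
      cases hp with
      | cons he1 hp' =>
        cases hw with
        | cons he2 hw' =>
          rename_i w1 w2
          exact Trans.cons (v := x) (w := (w1, w2)) ⟨he1, he2⟩ (ih hp' hw')

lemma prodW_lang (P W : PGraph U Y) : (P.prodW W).lang = P.lang ∩ W.lang := by
  ext s
  constructor
  · rintro ⟨v0, hv0, w, hw⟩
    rw [prodW_trans_iff] at hw
    exact ⟨⟨v0.1, hv0.1, w.1, hw.1⟩, ⟨v0.2, hv0.2, w.2, hw.2⟩⟩
  · rintro ⟨⟨v0, hv0, v, hv⟩, ⟨w0, hw0, w, hw⟩⟩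
    exact ⟨(v0, w0), ⟨hv0, hw0⟩, (v, w), prodW_trans_iff.mpr ⟨hv, hw⟩⟩

lemma sd_trans_unique {W : PGraph U Y} (hW : W.StateDetermined) {v a b : W.V}
    {s : List (U ⊕ Y)} (ha : W.Trans v s a) (hb : W.Trans v s b) : a = b := by
  induction s generalizing v with
  | nil => rw [trans_nil_eq ha, trans_nil_eq hb]
  | cons e s ih =>
    cases ha with
    | cons he1 ha' =>
      cases hb with
      | cons he2 hb' =>
        rename_i w1 w2
        have hw12 : w1 = w2 := by
          by_contra hne
          have := hW.2 v w1 w2 hne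
          exact absurd (Set.mem_inter he1 he2) (by rw [this]; exact Set.notMem_empty e)
        subst hw12
        exact ih ha' hb'

end PGraph

end AuxProd

/-- If some plan solves a planning problem `(W, Vgoal)` with `W` in
state-determined presentation, then some homomorphic solution solves it. -/
theorem plan_exists_implies_homomorphic_plan_exists
    {U Y : Type} [Nonempty U] [Nonempty Y]
    (W : PGraph U Y) (Vgoal : Set W.V) (hW : W.StateDetermined)
    (hsol : ∃ (P : PGraph U Y) (Pterm : Set P.V), PGraph.Solves P Pterm W Vgoal) :
    ∃ (Q : PGraph U Y) (Qterm : Set Q.V),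
      PGraph.HomomorphicSolution Q Qterm W Vgoal := by
  obtain ⟨P, Pterm, hakin, hfin, hsafe, hreach, hgoal⟩ := hsol
  refine ⟨P.prodW W, Pterm ×ˢ Set.univ, ?_, ?_⟩
  · have hlang := PGraph.prodW_lang P W
    have hsub : (P.prodW W).lang ⊆ P.lang := by rw [hlang]; exact Set.inter_subset_left
    have hjoint : (P.prodW W).lang ∩ W.lang = P.lang ∩ W.lang := by
      rw [hlang]; rw [Set.inter_assoc, Set.inter_self]
    -- conversions of ReachesVia
    have conv1 : ∀ s ∈ P.lang ∩ W.lang, PGraph.ReachesVia P Pterm s →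
        PGraph.ReachesVia (P.prodW W) (Pterm ×ˢ Set.univ) s := by
      rintro s ⟨_, w0, hw0, w, hw⟩ ⟨v0, hv0, v, hv, htr⟩
      exact ⟨(v0, w0), ⟨hv0, hw0⟩, (v, w), ⟨hv, trivial⟩,
        PGraph.prodW_trans_iff.mpr ⟨htr, hw⟩⟩
    have conv2 : ∀ s, PGraph.ReachesVia (P.prodW W) (Pterm ×ˢ Set.univ) s →
        PGraph.ReachesVia P Pterm s := by
      rintro s ⟨v0, hv0, v, hv, htr⟩
      rw [PGraph.prodW_trans_iff] at htr
      exact ⟨v0.1, hv0.1, v.1, hv.1, htr.1⟩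
    refine ⟨?_, ?_, ?_, ?_, ?_⟩
    · -- Akin
      rcases hakin with ⟨h1, h2⟩ | ⟨h1, h2⟩
      · exact Or.inl ⟨fun s hs => h1 s (hsub hs), h2⟩
      · exact Or.inr ⟨fun s hs => h1 s (hsub hs), h2⟩
    · -- FiniteOn
      obtain ⟨k, hk⟩ := hfin
      exact ⟨k, fun s hs => hk s (by rwa [hjoint] at hs)⟩
    · -- Safe
      intro s hs
      rw [hjoint] at hs
      refine ⟨fun _ e he => by rw [hlang] at he; exact he.2, fun hat e he => ?_⟩
      rw [hlang]
      exact ⟨((hsafe s hs).2 hat e he), he⟩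
    · -- termination reachability
      intro s hs
      rw [hjoint] at hs
      rcases hreach s hs with h | ⟨t, ht, hpre, hvia⟩
      · exact Or.inl (conv1 s hs h)
      · exact Or.inr ⟨t, by rwa [hjoint], hpre, conv1 t ht hvia⟩
    · -- goal correctness
      intro s hs hvia
      rw [hjoint] at hs
      exact hgoal s hs (conv2 s hvia)
  · -- HomRel is a function
    obtain ⟨c, hc⟩ := hW.1
    rintro v w w' ⟨s, _, ⟨q0, hq0, hq⟩, w0, hw0, hwtr⟩ ⟨s', _, ⟨q0', hq0', hq'⟩, w0', hw0', hwtr'⟩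
    rw [PGraph.prodW_trans_iff] at hq hq'
    have hcq : q0.2 = c := by have := hq0.2; rwa [hc, Set.mem_singleton_iff] at this
    have hcq' : q0'.2 = c := by have := hq0'.2; rwa [hc, Set.mem_singleton_iff] at this
    have hcw : w0 = c := by rwa [hc, Set.mem_singleton_iff] at hw0
    have hcw' : w0' = c := by rwa [hc, Set.mem_singleton_iff] at hw0'
    have h1 : w = v.2 := PGraph.sd_trans_unique hW (hcw ▸ hwtr) (hcq ▸ hq.2)
    have h2 : w' = v.2 := PGraph.sd_trans_unique hW (hcw' ▸ hwtr') (hcq' ▸ hq'.2)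
    rw [h1, h2]
end

section
/- If (P, P_term) is a solution to the planning problem (G, V_goal) that is not a homomorphic solution, then for every label map h, the plan (h(P), P_term) is not a homomorphic solution to (h(G), V_goal). -/
/-- Label maps never introduce homomorphism: if `(P, Pterm)` is a
non-homomorphic solution to `(G, Vgoal)` then no label map `h` makes `(h(P), Pterm)`
a homomorphic solution to `(h(G), Vgoal)`. -/
theorem label_maps_never_introduce_homomorphism
    {U Y U' Y' : Type} [Nonempty U] [Nonempty Y] [Nonempty U'] [Nonempty Y']
    (P G : PGraph U Y) (Pterm : Set P.V) (Vgoal : Set G.V)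
    (hsol : PGraph.Solves P Pterm G Vgoal)
    (hnothom : ¬ PGraph.HomomorphicSolution P Pterm G Vgoal)
    (h : LabelMap U Y U' Y') :
    ¬ PGraph.HomomorphicSolution (PGraph.applyMap h P) Pterm
        (PGraph.applyMap h G) Vgoal := by
  intro hhom
  apply hnothom
  refine ⟨hsol, ?_⟩
  intro v w w' hvw hvw'
  classical
  have hne : ∀ e : U ⊕ Y, (h.event e).Nonempty := by
    rintro (u | y)
    · exact (h.actMap_nonempty u).image _
    · exact (h.obsMap_nonempty y).image _
  set pick : U ⊕ Y → U' ⊕ Y' := fun e => (hne e).choose with hpickdef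
  have hpickmem : ∀ e, pick e ∈ h.event e := fun e => (hne e).choose_spec
  have lift : ∀ (Q : PGraph U Y) (a b : Q.V) (s : List (U ⊕ Y)),
      Q.Trans a s b → (PGraph.applyMap h Q).Trans a (s.map pick) b := by
    intro Q a b s hs
    induction hs with
    | nil v => exact PGraph.Trans.nil (G := PGraph.applyMap h Q) v
    | cons he _ ih =>
      rename_i v' w' x' e' s' _
      refine PGraph.Trans.cons ?_ ih
      exact Set.mem_biUnion he (hpickmem e')
  have lifthom : ∀ (v : P.V) (w : G.V), PGraph.HomRel P G v w →
      PGraph.HomRel (PGraph.applyMap h P) (PGraph.applyMap h G) v w := by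
    rintro a b ⟨s, ⟨⟨p0, hp0, p, hp⟩, ⟨g0, hg0, g, hg⟩⟩, ⟨v0, hv0, hv⟩, ⟨w0, hw0, hw⟩⟩
    exact ⟨s.map pick,
      ⟨⟨p0, hp0, p, lift P _ _ _ hp⟩, ⟨g0, hg0, g, lift G _ _ _ hg⟩⟩,
      ⟨v0, hv0, lift P _ _ _ hv⟩, ⟨w0, hw0, lift G _ _ _ hw⟩⟩
  exact hhom.2 v w w' (lifthom v w hvw) (lifthom v w' hvw')
end

section
/- Let (G, V_goal) be a planning problem with G in state-determined presentation, and let H denote the set of all homomorphic solutions to (G, V_goal). Any label map h that is destructive on H is strongly destructive on (G, V_goal); that is, if for every homomorphic solution (P, V_term) ∈ H the plan (h(P), V_term) fails to solve (h(G), V_goal), then for every solution (P, V_term) to (G, V_goal) whatsoever, (h(P), V_term) fails to solve (h(G), V_goal). -/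
section ExtAux

variable {U Y U' Y' : Type}

open PGraph

/-- Correspondence of event sequences under a label map. -/
def CorrL (h : LabelMap U Y U' Y') : List (U ⊕ Y) → List (U' ⊕ Y') → Prop :=
  List.Forall₂ (fun e f => f ∈ h.event e)

lemma LabelMap.event_nonempty (h : LabelMap U Y U' Y') (e : U ⊕ Y) :
    (h.event e).Nonempty := by
  cases e with
  | inl u => exact (h.actMap_nonempty u).image _
  | inr y => exact (h.obsMap_nonempty y).image _

lemma trans_map_of_trans {h : LabelMap U Y U' Y'} {A : PGraph U Y}
    {v w : A.V} {s : List (U ⊕ Y)} {t : List (U' ⊕ Y')}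
    (ht : A.Trans v s w) (hc : CorrL h s t) :
    (PGraph.applyMap h A).Trans v t w := by
  induction ht generalizing t with
  | nil v => cases hc; exact PGraph.Trans.nil (G := PGraph.applyMap h A) v
  | cons he htr ih =>
    cases hc with
    | cons hf hc' =>
      exact PGraph.Trans.cons
        (show _ ∈ (PGraph.applyMap h A).label _ _ from Set.mem_biUnion he hf) (ih hc')

lemma trans_of_trans_map {h : LabelMap U Y U' Y'} {A : PGraph U Y}
    {v w : (PGraph.applyMap h A).V} {t : List (U' ⊕ Y')}
    (ht : (PGraph.applyMap h A).Trans v t w) :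
    ∃ s, CorrL h s t ∧ A.Trans v s w := by
  induction ht with
  | nil v => exact ⟨[], List.Forall₂.nil, PGraph.Trans.nil (G := A) v⟩
  | @cons v w x f t' he htr ih =>
    obtain ⟨s, hc, htr'⟩ := ih
    have he' : ∃ e ∈ A.label v w, f ∈ h.event e := by
      simpa [PGraph.applyMap, LabelMap.setImage] using he
    obtain ⟨e, heA, hf⟩ := he'
    exact ⟨e :: s, List.Forall₂.cons hf hc, PGraph.Trans.cons heA htr'⟩

lemma lang_map (h : LabelMap U Y U' Y') (A : PGraph U Y) :
    (PGraph.applyMap h A).lang = {t | ∃ s ∈ A.lang, CorrL h s t} := by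
  ext t
  constructor
  · rintro ⟨v0, hv0, w, ht⟩
    obtain ⟨s, hc, ht'⟩ := trans_of_trans_map ht
    exact ⟨s, ⟨v0, hv0, w, ht'⟩, hc⟩
  · rintro ⟨s, ⟨v0, hv0, w, ht⟩, hc⟩
    exact ⟨v0, hv0, w, trans_map_of_trans ht hc⟩

lemma reachesVia_map_iff (h : LabelMap U Y U' Y') (A : PGraph U Y) (T : Set A.V)
    (t : List (U' ⊕ Y')) :
    PGraph.ReachesVia (PGraph.applyMap h A) T t ↔
      ∃ s, CorrL h s t ∧ PGraph.ReachesVia A T s := by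
  constructor
  · rintro ⟨v0, hv0, v, hvT, ht⟩
    obtain ⟨s, hc, ht'⟩ := trans_of_trans_map ht
    exact ⟨s, hc, v0, hv0, v, hvT, ht'⟩
  · rintro ⟨s, hc, v0, hv0, v, hvT, ht⟩
    exact ⟨v0, hv0, v, hvT, trans_map_of_trans ht hc⟩

lemma solves_congr {A B W : PGraph U Y} {Ta : Set A.V} {Tb : Set B.V}
    {Vg : Set W.V} (hl : A.lang = B.lang)
    (hr : PGraph.ReachesVia A Ta = PGraph.ReachesVia B Tb) :
    PGraph.Solves B Tb W Vg → PGraph.Solves A Ta W Vg := by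
  unfold PGraph.Solves
  rw [hl, hr]
  exact id

/-- The tracking product of a plan `P` with a world graph `G`: the plan `P`, with each
state annotated by the `G`-state reached so far (or `none` once the execution has left
the language of `G`). -/
def PGraph.track (P G : PGraph U Y) : PGraph U Y where
  V := P.V × Option G.V
  isAct := fun v => P.isAct v.1
  label := fun v w =>
    match v.2, w.2 with
    | some g, some g' => P.label v.1 w.1 ∩ G.label g g'
    | some g, none => P.label v.1 w.1 ∩ {e | ∀ g', e ∉ G.label g g'}
    | none, none => P.label v.1 w.1
    | none, some _ => ∅
  act_ok := by
    rintro ⟨p, (_ | g)⟩ ⟨q, (_ | g')⟩ e he hv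
    · exact P.act_ok p q e he hv
    · exact absurd he (Set.notMem_empty e)
    · exact P.act_ok p q e he.1 hv
    · exact P.act_ok p q e he.1 hv
  obs_ok := by
    rintro ⟨p, (_ | g)⟩ ⟨q, (_ | g')⟩ e he hv
    · exact P.obs_ok p q e he hv
    · exact absurd he (Set.notMem_empty e)
    · exact P.obs_ok p q e he.1 hv
    · exact P.obs_ok p q e he.1 hv
  V0 := {v | v.1 ∈ P.V0 ∧ ∃ g ∈ G.V0, v.2 = some g}
  V0_nonempty := by
    obtain ⟨p, hp⟩ := P.V0_nonempty
    obtain ⟨g, hg⟩ := G.V0_nonempty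
    exact ⟨(p, some g), hp, g, hg, rfl⟩
  startAct := P.startAct
  V0_uniform := fun v hv => P.V0_uniform v.1 hv.1

lemma track_label_sub {P G : PGraph U Y} {v w : (PGraph.track P G).V}
    {e : U ⊕ Y} (he : e ∈ (PGraph.track P G).label v w) : e ∈ P.label v.1 w.1 := by
  obtain ⟨p, (_ | g)⟩ := v <;> obtain ⟨q, (_ | g')⟩ := w
  · exact he
  · exact absurd he (Set.notMem_empty e)
  · exact he.1
  · exact he.1

lemma track_trans_fst {P G : PGraph U Y} {v w : (PGraph.track P G).V}
    {s : List (U ⊕ Y)} (h : (PGraph.track P G).Trans v s w) : P.Trans v.1 s w.1 := by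
  induction h with
  | nil v => exact PGraph.Trans.nil _
  | cons he ht ih => exact PGraph.Trans.cons (track_label_sub he) ih

lemma track_trans_lift {P G : PGraph U Y} {p0 p : P.V} {s : List (U ⊕ Y)}
    (h : P.Trans p0 s p) (x0 : Option G.V) :
    ∃ x, (PGraph.track P G).Trans (p0, x0) s (p, x) := by
  induction h generalizing x0 with
  | nil v => exact ⟨x0, PGraph.Trans.nil _⟩
  | cons he ht ih =>
    rename_i v w x e s'
    classical
    by_cases hx : ∃ g g', x0 = some g ∧ e ∈ G.label g g'
    · obtain ⟨g, g', rfl, hg⟩ := hx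
      obtain ⟨x1, ht1⟩ := ih (some g')
      exact ⟨x1, PGraph.Trans.cons
        (show e ∈ (PGraph.track P G).label (v, some g) (w, some g') from ⟨he, hg⟩) ht1⟩
    · obtain ⟨x1, ht1⟩ := ih none
      cases x0 with
      | none =>
        exact ⟨x1, PGraph.Trans.cons
          (show e ∈ (PGraph.track P G).label (v, none) (w, none) from he) ht1⟩
      | some g =>
        refine ⟨x1, PGraph.Trans.cons
          (show e ∈ (PGraph.track P G).label (v, some g) (w, none) from ⟨he, ?_⟩) ht1⟩
        intro g' hg'
        exact hx ⟨g, g', rfl, hg'⟩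

lemma track_lang (P G : PGraph U Y) : (PGraph.track P G).lang = P.lang := by
  ext s
  constructor
  · rintro ⟨v0, hv0, w, ht⟩
    exact ⟨v0.1, hv0.1, w.1, track_trans_fst ht⟩
  · rintro ⟨p0, hp0, p, ht⟩
    obtain ⟨g, hg⟩ := G.V0_nonempty
    obtain ⟨x, hx⟩ := track_trans_lift ht (some g)
    exact ⟨(p0, some g), ⟨hp0, g, hg, rfl⟩, (p, x), hx⟩

lemma track_reaches (P G : PGraph U Y) (Pterm : Set P.V) (s : List (U ⊕ Y)) :
    PGraph.ReachesVia (PGraph.track P G) {v | v.1 ∈ Pterm} s ↔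
      PGraph.ReachesVia P Pterm s := by
  constructor
  · rintro ⟨v0, hv0, v, hvT, ht⟩
    exact ⟨v0.1, hv0.1, v.1, hvT, track_trans_fst ht⟩
  · rintro ⟨p0, hp0, p, hpT, ht⟩
    obtain ⟨g, hg⟩ := G.V0_nonempty
    obtain ⟨x, hx⟩ := track_trans_lift ht (some g)
    exact ⟨(p0, some g), ⟨hp0, g, hg, rfl⟩, (p, x), hpT, hx⟩

lemma track_det {P G : PGraph U Y}
    (hSD : ∀ v w w' : G.V, w ≠ w' → G.label v w ∩ G.label v w' = ∅)
    {s : List (U ⊕ Y)} :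
    ∀ {p0 : P.V} {g0 w : G.V} {x : (PGraph.track P G).V},
      (PGraph.track P G).Trans (p0, some g0) s x → G.Trans g0 s w → x.2 = some w := by
  induction s with
  | nil =>
    intro p0 g0 w x hq hg
    have h1 := PGraph.trans_nil_eq hq
    have h2 := PGraph.trans_nil_eq hg
    subst h1; subst h2; rfl
  | cons e s ih =>
    intro p0 g0 w x hq hg
    obtain ⟨mid, hq1, ht⟩ := PGraph.trans_append (s := [e]) (t := s) hq
    have he := PGraph.trans_single hq1
    · 
      cases hg with
      | @cons _ w1 _ _ _ hge htg =>
        obtain ⟨p1, (_ | g1)⟩ := mid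
        · exact absurd hge (he.2 w1)
        · have hg1 : g1 = w1 := by
            by_contra hne
            have hmem : e ∈ G.label g0 g1 ∩ G.label g0 w1 := ⟨he.2, hge⟩
            rw [hSD g0 g1 w1 hne] at hmem
            exact Set.notMem_empty e hmem
          subst hg1
          exact ih ht htg

lemma track_homrel_fun {P G : PGraph U Y} (hSD : G.StateDetermined)
    (v : (PGraph.track P G).V) (w w' : G.V)
    (h1 : PGraph.HomRel (PGraph.track P G) G v w)
    (h2 : PGraph.HomRel (PGraph.track P G) G v w') : w = w' := by
  obtain ⟨vstar, hvstar⟩ := hSD.1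
  obtain ⟨s, _, ⟨q0, hq0, hqt⟩, ⟨w0, hw0, hwt⟩⟩ := h1
  obtain ⟨s', _, ⟨q0', hq0', hqt'⟩, ⟨w0', hw0', hwt'⟩⟩ := h2
  obtain ⟨hq0P, g0, hg0, hq0eq⟩ := hq0
  obtain ⟨hq0P', g0', hg0', hq0eq'⟩ := hq0'
  rw [hvstar, Set.mem_singleton_iff] at hw0 hw0'
  rw [hvstar, Set.mem_singleton_iff] at hg0 hg0'
  subst hw0; subst hw0'; subst hg0; subst hg0'
  obtain ⟨p0, x0⟩ := q0
  obtain ⟨p0', x0'⟩ := q0'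
  simp only at hq0eq hq0eq'
  subst hq0eq; subst hq0eq'
  have e1 := track_det hSD.2 hqt hwt
  have e2 := track_det hSD.2 hqt' hwt'
  rw [e1] at e2
  exact Option.some.inj e2

end ExtAux

/-- extensive destructiveness: for a state-determined planning problem
`(G, Vgoal)`, any label map that is destructive on the set of homomorphic solutions
is strongly destructive (destructive on all solutions). -/
theorem extensive_destructiveness
    {U Y U' Y' : Type} [Nonempty U] [Nonempty Y] [Nonempty U'] [Nonempty Y']
    (G : PGraph U Y) (Vgoal : Set G.V) (hG : G.StateDetermined)
    (h : LabelMap U Y U' Y')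
    (hdest : ∀ (P : PGraph U Y) (Pterm : Set P.V),
      PGraph.HomomorphicSolution P Pterm G Vgoal →
        ¬ PGraph.Solves (PGraph.applyMap h P) Pterm (PGraph.applyMap h G) Vgoal) :
    ∀ (P : PGraph U Y) (Pterm : Set P.V),
      PGraph.Solves P Pterm G Vgoal →
        ¬ PGraph.Solves (PGraph.applyMap h P) Pterm (PGraph.applyMap h G) Vgoal := by
  intro P Pterm hPsolve hcontra
  have hQsolve : PGraph.Solves (PGraph.track P G) {v | v.1 ∈ Pterm} G Vgoal :=
    solves_congr (track_lang P G)
      (funext fun s => propext (track_reaches P G Pterm s)) hPsolve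
  have hhom : PGraph.HomomorphicSolution (PGraph.track P G) {v | v.1 ∈ Pterm} G Vgoal :=
    ⟨hQsolve, fun v w w' => track_homrel_fun hG v w w'⟩
  apply hdest (PGraph.track P G) {v | v.1 ∈ Pterm} hhom
  refine solves_congr ?_ ?_ hcontra
  · rw [lang_map, lang_map, track_lang]
  · funext t
    refine propext ?_
    rw [reachesVia_map_iff, reachesVia_map_iff]
    constructor
    · rintro ⟨s, hc, hr⟩
      exact ⟨s, hc, (track_reaches P G Pterm s).mp hr⟩
    · rintro ⟨s, hc, hr⟩
      exact ⟨s, hc, (track_reaches P G Pterm s).mpr hr⟩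
end
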